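/- Let K be a standard kernel with respect to an upper doubling measure μ with dominating function λ. If B = B(c_B, r_B) is a ball and R_B ∈ [r_B, 1.2 r_B] a regularized radius, then ∫_{B(c_B, R_B)} ∫_{B(c_B, 3r_B) ∖ B(c_B, R_B)} |K(x,y)| dμ(y) dμ(x) ≤ C μ(B(c_B, R_B))^{1/2} μ(B(c_B, 3r_B))^{1/2} ≤ C μ(B(c_B, 3 r_B)). -/

import Mathlib

open MeasureTheory Metric

private lemma setLIntegral_le_of_forall_le {α : Type*} [MeasurableSpace α] (μ : Measure α)
    (s : Set α) (f : α → ENNReal) (c : ENNReal) (h : ∀ x ∈ s, f x ≤ c) :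
    ∫⁻ x in s, f x ∂μ ≤ c * μ s := by
  rw [lintegral_def]
  refine iSup_le fun g => iSup_le fun hg => ?_
  have hdef : g.lintegral (μ.restrict s) =
      ∑ x ∈ g.range, x * (μ.restrict s) (g ⁻¹' {x}) := rfl
  rw [hdef]
  calc ∑ x ∈ g.range, x * (μ.restrict s) (g ⁻¹' {x})
      ≤ ∑ x ∈ g.range, c * (μ.restrict s) (g ⁻¹' {x}) := by
        refine Finset.sum_le_sum fun x hx => ?_
        rcases eq_or_ne ((μ.restrict s) (g ⁻¹' {x})) 0 with h0 | h0
        · simp [h0]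
        · rw [Measure.restrict_apply (g.measurableSet_fiber x)] at h0
          have hne : ((g ⁻¹' {x}) ∩ s).Nonempty := by
            rw [Set.nonempty_iff_ne_empty]
            intro he
            exact h0 (by rw [he, measure_empty])
          obtain ⟨w, hw1, hw2⟩ := hne
          have hxw : x = g w := (Set.mem_singleton_iff.mp hw1).symm
          have : x ≤ c := hxw ▸ le_trans (hg w) (h w hw2)
          exact mul_le_mul' this le_rfl
    _ = c * ∑ x ∈ g.range, (μ.restrict s) (g ⁻¹' {x}) := by rw [Finset.mul_sum]
    _ = c * (μ.restrict s) Set.univ := by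
        rw [MeasureTheory.SimpleFunc.sum_range_measure_preimage_singleton]
    _ = c * μ s := by rw [Measure.restrict_apply_univ]

private lemma min_le_sqrt_mul (a b : ENNReal) :
    min a b ≤ a ^ ((1 : ℝ)/2) * b ^ ((1 : ℝ)/2) := by
  have key : min a b = min a b ^ ((1 : ℝ)/2) * min a b ^ ((1 : ℝ)/2) := by
    rw [← ENNReal.rpow_add_of_nonneg _ _ (by norm_num) (by norm_num)]
    norm_num
  calc min a b = min a b ^ ((1 : ℝ)/2) * min a b ^ ((1 : ℝ)/2) := key
    _ ≤ a ^ ((1 : ℝ)/2) * b ^ ((1 : ℝ)/2) :=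
        mul_le_mul' (ENNReal.rpow_le_rpow (min_le_left _ _) (by norm_num))
          (ENNReal.rpow_le_rpow (min_le_right _ _) (by norm_num))

/-- For a standard kernel `K` (size condition with constant `Bk` relative to
the dominating function `lam` of the upper doubling measure `μ`), a ball `B(c,r)` and a
regularized radius `R ∈ [r, 1.2 r]` (with regularization constant `Creg`), one has
`∫_{B(c,R)} ∫_{B(c,3r)∖B(c,R)} |K(x,y)| dμ(y) dμ(x)
  ≤ C μ(B(c,R))^{1/2} μ(B(c,3r))^{1/2} ≤ C μ(B(c,3r))`. -/
theorem stmt5 (Cl Bk Creg : ℝ) (hCl : 1 ≤ Cl) (hBk : 0 < Bk) (hCreg : 0 < Creg) :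
    ∃ C : ℝ, 0 < C ∧
      ∀ (X : Type) [MeasurableSpace X] [MetricSpace X] (μ : Measure X)
        (lam : X → ℝ → ℝ) (K : X → X → ℂ),
        (∀ x r, 0 < r → 0 < lam x r) →
        (∀ x r s, 0 < r → r ≤ s → lam x r ≤ lam x s) →
        (∀ x r, 0 < r → lam x (2 * r) ≤ Cl * lam x r) →
        (∀ x r, 0 < r → μ (ball x r) ≤ ENNReal.ofReal (lam x r)) →
        (∀ x y, x ≠ y →
          ‖K x y‖ ≤ Bk * min (1 / lam x (dist x y)) (1 / lam y (dist x y))) →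
        ∀ (c : X) (r R : ℝ), 0 < r → r ≤ R → R ≤ 1.2 * r →
        (∀ s : ℝ, 0 ≤ s → s ≤ 1.5 →
          μ {x | R - r * s < dist x c ∧ dist x c < R + r * s} ≤
            ENNReal.ofReal (Creg * s) * μ (ball c (3 * r))) →
        (∫⁻ x in ball c R,
            ∫⁻ y in ball c (3 * r) \ ball c R, ENNReal.ofReal ‖K x y‖ ∂μ ∂μ ≤
          ENNReal.ofReal C * (μ (ball c R)) ^ ((1 : ℝ) / 2) *
            (μ (ball c (3 * r))) ^ ((1 : ℝ) / 2)) ∧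
        ENNReal.ofReal C * (μ (ball c R)) ^ ((1 : ℝ) / 2) *
            (μ (ball c (3 * r))) ^ ((1 : ℝ) / 2) ≤
          ENNReal.ofReal C * μ (ball c (3 * r)) := by
  -- the geometric-type series
  set q : ℝ := (1/2 : ℝ) ^ ((1 : ℝ)/2) with hq_def
  have hq0 : 0 ≤ q := Real.rpow_nonneg (by norm_num) _
  have hq1 : q < 1 := Real.rpow_lt_one (by norm_num) (by norm_num) (by norm_num)
  have hpow : ∀ k : ℕ, ((1/2 : ℝ) ^ k) ^ ((1 : ℝ)/2) = q ^ k := by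
    intro k
    rw [← Real.rpow_natCast (1/2 : ℝ) k, ← Real.rpow_mul (by norm_num), mul_comm,
      Real.rpow_mul (by norm_num), Real.rpow_natCast]
  set f : ℕ → ℝ := fun k => ((k : ℝ) + 4) * (Creg * (1.5 / 2 ^ k)) ^ ((1 : ℝ)/2) with hf_def
  have hbase : ∀ k : ℕ, Creg * (1.5 / 2 ^ k) = (Creg * 1.5) * (1/2 : ℝ) ^ k := by
    intro k
    rw [div_pow, one_pow]
    ring
  have hf_eq : ∀ k, f k = (Creg * 1.5) ^ ((1 : ℝ)/2) * (((k : ℝ) + 4) * q ^ k) := by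
    intro k
    rw [hf_def]
    dsimp only
    rw [hbase k, Real.mul_rpow (by positivity) (by positivity), hpow]
    ring
  have hsum_kq : Summable (fun k : ℕ => ((k : ℝ) + 4) * q ^ k) := by
    have h1 := summable_pow_mul_geometric_of_norm_lt_one (R := ℝ) 1
      (r := q) (by rwa [Real.norm_of_nonneg hq0])
    have h2 : Summable (fun k : ℕ => (4 : ℝ) * q ^ k) :=
      (summable_geometric_of_norm_lt_one (K := ℝ) (by rwa [Real.norm_of_nonneg hq0])).mul_left 4
    refine (h1.add h2).congr fun k => ?_
    simp only [pow_one]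
    ring
  have hfs : Summable f := by
    have := hsum_kq.mul_left ((Creg * 1.5) ^ ((1 : ℝ)/2))
    refine this.congr fun k => (hf_eq k).symm
  have hf_nonneg : ∀ k, 0 ≤ f k := by
    intro k
    have : (0:ℝ) ≤ (Creg * (1.5 / 2 ^ k)) ^ ((1 : ℝ)/2) := Real.rpow_nonneg (by positivity) _
    rw [hf_def]
    positivity
  have hf0 : 0 < f 0 := by
    rw [hf_def]
    simp only [Nat.cast_zero, pow_zero]
    have : (0:ℝ) < (Creg * (1.5 / 1)) ^ ((1 : ℝ)/2) := Real.rpow_pos_of_pos (by positivity) _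
    nlinarith
  have htsum_pos : 0 < ∑' k, f k := Summable.tsum_pos hfs hf_nonneg 0 hf0
  refine ⟨Bk * Cl * ∑' k, f k, by positivity, ?_⟩
  intro X _ _ μ lam K hlam_pos hlam_mono hlam_dbl hμlam hK c r R hr hrR hR12 hreg
  have hCl0 : (0:ℝ) < Cl := lt_of_lt_of_le one_pos hCl
  have h3r : (0:ℝ) < 3 * r := by linarith
  have hR0 : (0:ℝ) < R := lt_of_lt_of_le hr hrR
  have hMR3 : μ (ball c R) ≤ μ (ball c (3 * r)) :=
    measure_mono (ball_subset_ball (by linarith))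
  constructor
  · -- main estimate
    set D : Set X := ball c (3 * r) \ ball c R with hD_def
    set T : ℕ → Set X := fun k => {x | dist x c < R ∧ R - dist x c < 1.5 * r / 2 ^ k}
      with hT_def
    set S : ℕ → Set X := fun k => T k \ T (k + 1) with hS_def
    -- covering of the inner ball by the layers
    have hcover : ball c R ⊆ ⋃ k, S k := by
      intro x hx
      have hxR : dist x c < R := mem_ball.mp hx
      have hd : 0 < R - dist x c := by linarith
      have hex : ∃ k : ℕ, 1.5 * r / 2 ^ (k + 1) ≤ R - dist x c := by
        obtain ⟨n, hn⟩ := pow_unbounded_of_one_lt ((1.5 * r) / (R - dist x c))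
          (by norm_num : (1:ℝ) < 2)
        have h2 : (1.5 * r) / (R - dist x c) < 2 ^ (n + 1) :=
          lt_of_lt_of_le hn (pow_le_pow_right₀ (by norm_num) (Nat.le_succ n))
        rw [div_lt_iff₀ hd] at h2
        refine ⟨n, le_of_lt ?_⟩
        rw [div_lt_iff₀ (by positivity : (0:ℝ) < (2:ℝ) ^ (n + 1))]
        linarith [mul_comm ((2:ℝ) ^ (n + 1)) (R - dist x c)]
      refine Set.mem_iUnion.mpr ⟨Nat.find hex, ⟨?_, ?_⟩⟩
      · refine ⟨hxR, ?_⟩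
        rcases Nat.eq_zero_or_pos (Nat.find hex) with h0 | hpos
        · rw [h0]
          have : dist x c ≥ 0 := dist_nonneg
          simp only [pow_zero, div_one]
          linarith
        · obtain ⟨m, hm⟩ := Nat.exists_eq_succ_of_ne_zero hpos.ne'
          have := Nat.find_min hex (m := m) (by omega)
          push_neg at this
          rw [hm]
          exact this
      · intro hmem
        have h2 := hmem.2
        have h1 := Nat.find_spec hex
        linarith
    -- inner integral estimate on each layer
    have hinner : ∀ k : ℕ, ∀ x ∈ S k,
        (∫⁻ y in D, ENNReal.ofReal ‖K x y‖ ∂μ) ≤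
          ENNReal.ofReal (((k : ℝ) + 4) * (Bk * Cl)) := by
      intro k x hx
      set δ : ℝ := 1.5 * r / 2 ^ (k + 1) with hδ_def
      have hδ0 : 0 < δ := by positivity
      have hxR : dist x c < R := hx.1.1
      have hdx : δ ≤ R - dist x c := by
        by_contra h
        push_neg at h
        exact hx.2 ⟨hxR, h⟩
      have hDbound : ∀ y ∈ D, δ ≤ dist x y ∧ dist x y < 2 ^ (k + 4) * δ := by
        intro y hy
        have hy3 : dist y c < 3 * r := mem_ball.mp hy.1
        have hyR : R ≤ dist y c := by
          have := hy.2
          simpa [mem_ball, not_lt] using this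
        have hcomm : dist x y = dist y x := dist_comm x y
        constructor
        · have h1 : dist y c ≤ dist y x + dist x c := dist_triangle y x c
          linarith
        · have h2 : dist x y ≤ dist x c + dist c y := dist_triangle x c y
          have hcomm2 : dist c y = dist y c := dist_comm c y
          have h24 : (2:ℝ) ^ (k + 4) * δ = 12 * r := by
            have h2p : (2:ℝ) ^ (k + 4) = 2 ^ (k + 1) * 8 := by
              rw [show k + 4 = (k + 1) + 3 by ring, pow_add]
              norm_num
            rw [hδ_def, h2p]
            field_simp
            ring
          rw [h24]
          linarith
      set A : ℕ → Set X := fun j =>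
        ({y | 2 ^ j * δ ≤ dist x y ∧ dist x y < 2 ^ (j + 1) * δ} ∩ D) with hA_def
      have hsub : D ⊆ ⋃ j, A j := by
        intro y hy
        obtain ⟨h1, h2⟩ := hDbound y hy
        have hexj : ∃ j : ℕ, dist x y < 2 ^ (j + 1) * δ :=
          ⟨k + 3, by rwa [show k + 3 + 1 = k + 4 by ring]⟩
        refine Set.mem_iUnion.mpr ⟨Nat.find hexj, ⟨⟨?_, Nat.find_spec hexj⟩, hy⟩⟩
        rcases Nat.eq_zero_or_pos (Nat.find hexj) with h0 | hpos
        · rw [h0]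
          simpa using h1
        · obtain ⟨m, hm⟩ := Nat.exists_eq_succ_of_ne_zero hpos.ne'
          have := Nat.find_min hexj (m := m) (by omega)
          push_neg at this
          rw [hm]
          exact this
      have hannulus : ∀ j : ℕ,
          (∫⁻ y in A j, ENNReal.ofReal ‖K x y‖ ∂μ) ≤ ENNReal.ofReal (Bk * Cl) := by
        intro j
        have hδj0 : (0:ℝ) < 2 ^ j * δ := by positivity
        have hL0 : 0 < lam x (2 ^ j * δ) := hlam_pos x _ hδj0
        have hpt : ∀ y ∈ A j,
            ENNReal.ofReal ‖K x y‖ ≤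
              ENNReal.ofReal (Bk * (1 / lam x (2 ^ j * δ))) := by
          intro y hy
          obtain ⟨⟨hy1, hy2⟩, _⟩ := hy
          have hxy0 : 0 < dist x y := lt_of_lt_of_le hδj0 hy1
          have hne : x ≠ y := by
            intro h
            rw [h, dist_self] at hxy0
            exact lt_irrefl _ hxy0
          apply ENNReal.ofReal_le_ofReal
          calc ‖K x y‖ ≤ Bk * min (1 / lam x (dist x y)) (1 / lam y (dist x y)) :=
                hK x y hne
            _ ≤ Bk * (1 / lam x (dist x y)) :=
                mul_le_mul_of_nonneg_left (min_le_left _ _) hBk.le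
            _ ≤ Bk * (1 / lam x (2 ^ j * δ)) := by
                refine mul_le_mul_of_nonneg_left ?_ hBk.le
                exact one_div_le_one_div_of_le hL0 (hlam_mono x _ _ hδj0 hy1)
        calc (∫⁻ y in A j, ENNReal.ofReal ‖K x y‖ ∂μ)
            ≤ ENNReal.ofReal (Bk * (1 / lam x (2 ^ j * δ))) * μ (A j) :=
              setLIntegral_le_of_forall_le μ _ _ _ hpt
          _ ≤ ENNReal.ofReal (Bk * (1 / lam x (2 ^ j * δ))) *
              ENNReal.ofReal (lam x (2 ^ (j + 1) * δ)) := by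
              refine mul_le_mul' le_rfl ?_
              refine le_trans (measure_mono ?_) (hμlam x _ (by positivity))
              intro y hy
              exact mem_ball'.mpr hy.1.2
          _ ≤ ENNReal.ofReal (Bk * (1 / lam x (2 ^ j * δ))) *
              ENNReal.ofReal (Cl * lam x (2 ^ j * δ)) := by
              refine mul_le_mul' le_rfl (ENNReal.ofReal_le_ofReal ?_)
              have hdbl := hlam_dbl x (2 ^ j * δ) hδj0
              have : (2:ℝ) ^ (j + 1) * δ = 2 * (2 ^ j * δ) := by ring
              rw [this]
              exact hdbl
          _ = ENNReal.ofReal ((Bk * (1 / lam x (2 ^ j * δ))) * (Cl * lam x (2 ^ j * δ))) :=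
              (ENNReal.ofReal_mul (by positivity)).symm
          _ = ENNReal.ofReal (Bk * Cl) := by
              congr 1
              field_simp
      have hAzero : ∀ j : ℕ, k + 3 < j →
          (∫⁻ y in A j, ENNReal.ofReal ‖K x y‖ ∂μ) = 0 := by
        intro j hj
        have hAe : A j = ∅ := by
          refine Set.eq_empty_iff_forall_notMem.mpr fun y hy => ?_
          obtain ⟨⟨hy1, _⟩, hyD⟩ := hy
          have hb := (hDbound y hyD).2
          have hle : (2:ℝ) ^ (k + 4) ≤ 2 ^ j := pow_le_pow_right₀ (by norm_num) (by omega)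
          have := mul_le_mul_of_nonneg_right hle hδ0.le
          linarith
        rw [hAe]
        simp
      calc (∫⁻ y in D, ENNReal.ofReal ‖K x y‖ ∂μ)
          ≤ ∫⁻ y in ⋃ j, A j, ENNReal.ofReal ‖K x y‖ ∂μ := lintegral_mono_set hsub
        _ ≤ ∑' j, ∫⁻ y in A j, ENNReal.ofReal ‖K x y‖ ∂μ := lintegral_iUnion_le _ _
        _ ≤ ∑' j, (if j ≤ k + 3 then ENNReal.ofReal (Bk * Cl) else 0) := by
            refine ENNReal.tsum_le_tsum fun j => ?_
            by_cases hj : j ≤ k + 3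
            · rw [if_pos hj]
              exact hannulus j
            · rw [if_neg hj, hAzero j (by omega)]
        _ = ∑ j ∈ Finset.range (k + 4), (if j ≤ k + 3 then ENNReal.ofReal (Bk * Cl) else 0) :=
            tsum_eq_sum (fun b hb => if_neg (by simp only [Finset.mem_range] at hb; omega))
        _ = ∑ j ∈ Finset.range (k + 4), ENNReal.ofReal (Bk * Cl) :=
            Finset.sum_congr rfl fun j hj =>
              if_pos (by simp only [Finset.mem_range] at hj; omega)
        _ = (k + 4 : ℕ) * ENNReal.ofReal (Bk * Cl) := by
            rw [Finset.sum_const, Finset.card_range, nsmul_eq_mul]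
        _ = ENNReal.ofReal (((k : ℝ) + 4) * (Bk * Cl)) := by
            have hcast : ((k : ℝ) + 4) = ((k + 4 : ℕ) : ℝ) := by push_cast; ring
            rw [hcast, ← ENNReal.ofReal_natCast (k + 4),
              ← ENNReal.ofReal_mul (by positivity)]
    -- measure of each layer
    have hlayer : ∀ k : ℕ, μ (S k) ≤
        min (μ (ball c R)) (ENNReal.ofReal (Creg * (1.5 / 2 ^ k)) * μ (ball c (3 * r))) := by
      intro k
      refine le_min ?_ ?_
      · refine measure_mono ?_
        intro x hx
        exact mem_ball.mpr hx.1.1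
      · refine le_trans (measure_mono ?_) (hreg (1.5 / 2 ^ k) (by positivity) ?_)
        · intro x hx
          have h1 : dist x c < R := hx.1.1
          have h2 : R - dist x c < 1.5 * r / 2 ^ k := hx.1.2
          have hrs : r * (1.5 / 2 ^ k) = 1.5 * r / 2 ^ k := by ring
          constructor
          · rw [hrs]; linarith
          · have : 0 < r * (1.5 / 2 ^ k) := by positivity
            linarith
        · have h1 : (1:ℝ) ≤ 2 ^ k := one_le_pow₀ (by norm_num)
          rw [div_le_iff₀ (by positivity)]
          nlinarith
    -- put everything together
    calc (∫⁻ x in ball c R, ∫⁻ y in D, ENNReal.ofReal ‖K x y‖ ∂μ ∂μ)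
        ≤ ∫⁻ x in ⋃ k, S k, ∫⁻ y in D, ENNReal.ofReal ‖K x y‖ ∂μ ∂μ :=
          lintegral_mono_set hcover
      _ ≤ ∑' k, ∫⁻ x in S k, ∫⁻ y in D, ENNReal.ofReal ‖K x y‖ ∂μ ∂μ :=
          lintegral_iUnion_le _ _
      _ ≤ ∑' (k : ℕ), ENNReal.ofReal (((k : ℝ) + 4) * (Bk * Cl)) * μ (S k) :=
          ENNReal.tsum_le_tsum fun k => setLIntegral_le_of_forall_le μ _ _ _ (hinner k)
      _ ≤ ∑' (k : ℕ), ENNReal.ofReal (Bk * Cl * f k) *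
            ((μ (ball c R)) ^ ((1 : ℝ)/2) * (μ (ball c (3 * r))) ^ ((1 : ℝ)/2)) := by
          refine ENNReal.tsum_le_tsum fun k => ?_
          have hmin := hlayer k
          have hminle := le_trans hmin (min_le_sqrt_mul _ _)
          have hsplit : (ENNReal.ofReal (Creg * (1.5 / 2 ^ k)) * μ (ball c (3 * r)))
              ^ ((1 : ℝ)/2) =
              ENNReal.ofReal ((Creg * (1.5 / 2 ^ k)) ^ ((1 : ℝ)/2)) *
                (μ (ball c (3 * r))) ^ ((1 : ℝ)/2) := by
            rw [ENNReal.mul_rpow_of_nonneg _ _ (by norm_num),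
              ENNReal.ofReal_rpow_of_nonneg (by positivity) (by norm_num)]
          rw [hsplit] at hminle
          calc ENNReal.ofReal (((k : ℝ) + 4) * (Bk * Cl)) * μ (S k)
              ≤ ENNReal.ofReal (((k : ℝ) + 4) * (Bk * Cl)) *
                ((μ (ball c R)) ^ ((1 : ℝ)/2) *
                  (ENNReal.ofReal ((Creg * (1.5 / 2 ^ k)) ^ ((1 : ℝ)/2)) *
                    (μ (ball c (3 * r))) ^ ((1 : ℝ)/2))) :=
                mul_le_mul' le_rfl hminle
            _ = ENNReal.ofReal (Bk * Cl * f k) *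
                ((μ (ball c R)) ^ ((1 : ℝ)/2) * (μ (ball c (3 * r))) ^ ((1 : ℝ)/2)) := by
                have e1 : ENNReal.ofReal (Bk * Cl * f k) =
                    ENNReal.ofReal (((k : ℝ) + 4) * (Bk * Cl)) *
                      ENNReal.ofReal ((Creg * (1.5 / 2 ^ k)) ^ ((1 : ℝ)/2)) := by
                  rw [← ENNReal.ofReal_mul (by positivity)]
                  congr 1
                  rw [hf_def]
                  ring
                rw [e1]
                ring
      _ = ENNReal.ofReal (Bk * Cl * ∑' k, f k) * (μ (ball c R)) ^ ((1 : ℝ)/2) *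
            (μ (ball c (3 * r))) ^ ((1 : ℝ)/2) := by
          rw [ENNReal.tsum_mul_right, ← ENNReal.ofReal_tsum_of_nonneg
            (fun k => by have := hf_nonneg k; positivity) (hfs.mul_left _), tsum_mul_left]
          ring
  · -- second inequality
    have h1 : (μ (ball c R)) ^ ((1 : ℝ)/2) ≤ (μ (ball c (3 * r))) ^ ((1 : ℝ)/2) :=
      ENNReal.rpow_le_rpow hMR3 (by norm_num)
    calc ENNReal.ofReal (Bk * Cl * ∑' k, f k) * (μ (ball c R)) ^ ((1 : ℝ)/2) *
          (μ (ball c (3 * r))) ^ ((1 : ℝ)/2)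
        ≤ ENNReal.ofReal (Bk * Cl * ∑' k, f k) * (μ (ball c (3 * r))) ^ ((1 : ℝ)/2) *
          (μ (ball c (3 * r))) ^ ((1 : ℝ)/2) := mul_le_mul' (mul_le_mul' le_rfl h1) le_rfl
      _ = ENNReal.ofReal (Bk * Cl * ∑' k, f k) * μ (ball c (3 * r)) := by
          rw [mul_assoc, ← ENNReal.rpow_add_of_nonneg _ _ (by norm_num) (by norm_num)]
          norm_num
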